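/- Let a, b, m, n : ℤ → ℝ be a positive solution of the ABMN system on ℤ. Then the sequence (m_i) is strictly increasing and bounded, and the sequence (n_i) is strictly decreasing and bounded. Consequently the four limits m_{−∞} = lim_{k→∞} m_{−k}, m_∞ = lim_{k→∞} m_k, n_{−∞} = lim_{k→∞} n_{−k} and n_∞ = lim_{k→∞} n_k exist as real numbers, satisfy m_{−∞} < m_∞ and n_∞ < n_{−∞}, and the Mina margin (n_{−∞} − n_∞)/(m_∞ − m_{−∞}) is a positive finite real number. -/

import Mathlib

/-- The ABMN system on ℤ. -/
def IsABMN (a b m n : ℤ → ℝ) : Prop :=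
  (∀ i, 0 ≤ a i) ∧ (∀ i, 0 ≤ b i) ∧
  (∀ i : ℤ, (a i + b i) * (m i + a i) = a i * m (i + 1) + b i * m (i - 1)) ∧
  (∀ i : ℤ, (a i + b i) * (n i + b i) = a i * n (i + 1) + b i * n (i - 1)) ∧
  (∀ i : ℤ, (a i + b i) ^ 2 = b i * (m (i + 1) - m (i - 1))) ∧
  (∀ i : ℤ, (a i + b i) ^ 2 = a i * (n (i - 1) - n (i + 1)))

/-- Ratio halving from the two recursions. -/
lemma abmn_half_ratio {A B C D : ℝ} (hA : 0 < A) (hB : 0 < B) (hC : 0 < C) (hD : 0 < D)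
    (r1 : C ^ 2 = D * (2 * A + B)) (r2 : B ^ 2 = A * (C + 2 * D)) :
    2 * (A * D) < B * C := by
  have key : (B * C) ^ 2 =
      (2 * A * D) ^ 2 + (2 * A ^ 2 * C * D + A * B * C * D + 2 * A * B * D ^ 2) := by
    linear_combination C ^ 2 * r2 + (A * (C + 2 * D)) * r1
  nlinarith [key, mul_pos hB hC, mul_pos hA hD,
    mul_pos (mul_pos hA hA) (mul_pos hC hD), mul_pos (mul_pos hA hB) (mul_pos hC hD),
    mul_pos (mul_pos hA hB) (mul_pos hD hD)]

/-- Forward analysis: monotonicity and one-sided bounds. -/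
lemma abmn_forward (a b m n : ℤ → ℝ) (h : IsABMN a b m n)
    (ha : ∀ i, 0 < a i) (hb : ∀ i, 0 < b i) :
    StrictMono m ∧ StrictAnti n ∧ BddAbove (Set.range m) ∧ BddBelow (Set.range n) := by
  obtain ⟨-, -, h1, h2, h3, h4⟩ := h
  have hab : ∀ i : ℤ, (0:ℝ) < a i + b i := fun i => by have := ha i; have := hb i; linarith
  -- step formulas
  have L1 : ∀ i : ℤ, m (i + 1) = m i + (2 * a i + b i) := by
    intro i
    have key : (a i + b i) * m (i + 1) = (a i + b i) * (m i + (2 * a i + b i)) := by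
      linear_combination - h1 i - h3 i
    exact mul_left_cancel₀ (hab i).ne' key
  have L2 : ∀ i : ℤ, b i * m (i - 1) = b i * m i - (a i) ^ 2 := by
    intro i
    linear_combination (-1 : ℝ) * h1 i - a i * L1 i
  have L4 : ∀ i : ℤ, n (i - 1) = n i + (a i + 2 * b i) := by
    intro i
    have key : (a i + b i) * n (i - 1) = (a i + b i) * (n i + (a i + 2 * b i)) := by
      linear_combination - h2 i - h4 i
    exact mul_left_cancel₀ (hab i).ne' key
  have L3 : ∀ i : ℤ, a i * n (i + 1) = a i * n i - (b i) ^ 2 := by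
    intro i
    linear_combination - h2 i - b i * L4 i
  -- recursions
  have R1 : ∀ i : ℤ, (a (i + 1)) ^ 2 = b (i + 1) * (2 * a i + b i) := by
    intro i
    have l2 := L2 (i + 1)
    rw [show i + 1 - 1 = i from by ring] at l2
    linear_combination b (i + 1) * L1 i + l2
  have R2 : ∀ i : ℤ, (b i) ^ 2 = a i * (a (i + 1) + 2 * b (i + 1)) := by
    intro i
    have l4 := L4 (i + 1)
    rw [show i + 1 - 1 = i from by ring] at l4
    linear_combination a i * l4 + L3 i
  have F3 : ∀ i : ℤ, 2 * (a i * b (i + 1)) < b i * a (i + 1) :=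
    fun i => abmn_half_ratio (ha i) (hb i) (ha (i + 1)) (hb (i + 1)) (R1 i) (R2 i)
  -- monotonicity
  have hm : StrictMono m := by
    apply strictMono_int_of_lt_succ
    intro i
    have := L1 i; have := ha i; have := hb i; linarith
  have L3e : ∀ i : ℤ, n (i + 1) = n i - (b i) ^ 2 / a i := by
    intro i
    have hA := (ha i).ne'
    field_simp
    linear_combination L3 i
  have hn : StrictAnti n := by
    apply strictAnti_int_of_succ_lt
    intro i
    have h0 : 0 < (b i) ^ 2 / a i := div_pos (pow_pos (hb i) 2) (ha i)
    have := L3e i; linarith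
  -- smallness propagation
  have step_small : ∀ j : ℤ, b j ≤ a j / 8 → 16 * b (j + 1) ≤ a (j + 1) := by
    intro j hs
    have f := F3 j
    have h1' : b j * a (j + 1) ≤ a j / 8 * a (j + 1) :=
      mul_le_mul_of_nonneg_right hs (ha (j + 1)).le
    nlinarith [ha j, hb (j + 1), ha (j + 1)]
  have S1 : ∀ j : ℤ, b j ≤ a j / 8 →
      2 * a (j + 1) + b (j + 1) ≤ (2 * a j + b j) / 2 := by
    intro j hs
    have h16 := step_small j hs
    have hd : 16 * a (j + 1) ≤ 2 * a j + b j := by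
      nlinarith [R1 j, ha (j + 1), hb (j + 1), ha j, hb j]
    have := ha (j + 1); have := hb (j + 1)
    linarith
  have S2 : ∀ j : ℤ, b j ≤ a j / 8 →
      (b (j + 1)) ^ 2 / a (j + 1) ≤ ((b j) ^ 2 / a j) / 2 := by
    intro j hs
    have h16 := step_small j hs
    have hd : 16 * a (j + 1) ≤ 2 * a j + b j := by
      nlinarith [R1 j, ha (j + 1), hb (j + 1), ha j, hb j]
    have hC2 : a (j + 1) ≤ 2 * a j := by have := ha j; linarith
    have hsq : 4 * (a j * b (j + 1)) ^ 2 ≤ (b j * a (j + 1)) ^ 2 := by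
      nlinarith [F3 j, mul_pos (ha j) (hb (j + 1)), mul_pos (hb j) (ha (j + 1))]
    have key : 2 * (a j * (b (j + 1)) ^ 2) ≤ a (j + 1) * (b j) ^ 2 := by
      nlinarith [hsq, mul_nonneg (mul_nonneg (sq_nonneg (b j)) (ha (j + 1)).le)
        (by linarith : (0:ℝ) ≤ 2 * a j - a (j + 1)), ha j]
    rw [div_div, div_le_div_iff₀ (ha (j + 1)) (mul_pos (ha j) two_pos)]
    nlinarith [key]
  -- find a small starting index
  set t : ℤ → ℝ := fun i => b i / a i with ht
  have hT : ∀ i : ℤ, t (i + 1) ≤ t i / 2 := by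
    intro i
    have f := F3 i
    rw [ht]
    simp only
    rw [div_div, div_le_div_iff₀ (ha (i + 1)) (mul_pos (ha i) two_pos)]
    nlinarith [f]
  have hTnn : ∀ i : ℤ, 0 ≤ t i := fun i => by
    have := ha i; have := hb i; positivity
  have decay : ∀ k : ℕ, t k ≤ t 0 / 2 ^ k := by
    intro k
    induction k with
    | zero => simp
    | succ k ih =>
      have h' := hT k
      have : t ((k : ℤ) + 1) ≤ t 0 / 2 ^ k / 2 := by linarith
      have hcast : ((k + 1 : ℕ) : ℤ) = (k : ℤ) + 1 := by push_cast; ring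
      rw [hcast]
      calc t ((k : ℤ) + 1) ≤ t 0 / 2 ^ k / 2 := this
        _ = t 0 / 2 ^ (k + 1) := by rw [div_div]; ring_nf
  obtain ⟨N, hN⟩ := exists_nat_gt (8 * t 0)
  have hN2 : (N : ℝ) < 2 ^ N := by exact_mod_cast (Nat.lt_two_pow_self (n := N))
  have hsmall0 : b (N : ℤ) ≤ a (N : ℤ) / 8 := by
    have h0 : t (N : ℤ) ≤ t 0 / 2 ^ N := decay N
    have h1' : t 0 / 2 ^ N ≤ 1 / 8 := by
      rw [div_le_div_iff₀ (by positivity) (by norm_num)]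
      nlinarith [hTnn 0]
    have h2' : b (N : ℤ) / a (N : ℤ) ≤ 1 / 8 := le_trans h0 h1'
    rw [div_le_div_iff₀ (ha _) (by norm_num)] at h2'
    linarith
  set i0 : ℤ := (N : ℤ) with hi0
  have smallAll : ∀ k : ℕ, b (i0 + k) ≤ a (i0 + k) / 8 := by
    intro k
    induction k with
    | zero => simpa using hsmall0
    | succ k ih =>
      have h16 := step_small (i0 + k) ih
      have hcast : (i0 + ((k + 1 : ℕ) : ℤ)) = (i0 + (k : ℕ)) + 1 := by push_cast; ring
      rw [hcast]
      have := ha (i0 + (k : ℕ) + 1)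
      linarith
  -- m bounded above
  have mbound : ∀ k : ℕ, m (i0 + k) + 2 * (2 * a (i0 + k) + b (i0 + k))
      ≤ m i0 + 2 * (2 * a i0 + b i0) := by
    intro k
    induction k with
    | zero => simp
    | succ k ih =>
      have hs := smallAll k
      have hstep := S1 (i0 + k) hs
      have hL := L1 (i0 + k)
      have hcast : (i0 + ((k + 1 : ℕ) : ℤ)) = (i0 + (k : ℕ)) + 1 := by push_cast; ring
      rw [hcast]
      linarith
  have hBA : BddAbove (Set.range m) := by
    refine ⟨m i0 + 2 * (2 * a i0 + b i0), ?_⟩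
    rintro x ⟨i, rfl⟩
    rcases le_or_gt i i0 with hc | hc
    · have := hm.monotone hc
      have := ha i0; have := hb i0
      linarith
    · set k : ℕ := (i - i0).toNat with hk
      have hik : i0 + (k : ℤ) = i := by omega
      have := mbound k
      rw [hik] at this
      have := ha i; have := hb i
      linarith
  -- n bounded below
  have nbound : ∀ k : ℕ, n i0 - 2 * ((b i0) ^ 2 / a i0)
      ≤ n (i0 + k) - 2 * ((b (i0 + k)) ^ 2 / a (i0 + k)) := by
    intro k
    induction k with
    | zero => simp
    | succ k ih =>
      have hs := smallAll k
      have hstep := S2 (i0 + k) hs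
      have hL := L3e (i0 + k)
      have hcast : (i0 + ((k + 1 : ℕ) : ℤ)) = (i0 + (k : ℕ)) + 1 := by push_cast; ring
      rw [hcast]
      linarith
  have hBB : BddBelow (Set.range n) := by
    refine ⟨n i0 - 2 * ((b i0) ^ 2 / a i0), ?_⟩
    rintro x ⟨i, rfl⟩
    rcases le_or_gt i i0 with hc | hc
    · have := hn.antitone hc
      have h0 : 0 < (b i0) ^ 2 / a i0 := div_pos (pow_pos (hb i0) 2) (ha i0)
      linarith
    · set k : ℕ := (i - i0).toNat with hk
      have hik : i0 + (k : ℤ) = i := by omega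
      have := nbound k
      rw [hik] at this
      have h0 : 0 < (b i) ^ 2 / a i := div_pos (pow_pos (hb i) 2) (ha i)
      linarith
  exact ⟨hm, hn, hBA, hBB⟩

/-- The reflection symmetry of the ABMN system. -/
lemma abmn_symm (a b m n : ℤ → ℝ) (h : IsABMN a b m n) :
    IsABMN (fun i => b (-i)) (fun i => a (-i)) (fun i => n (-i)) (fun i => m (-i)) := by
  obtain ⟨ha0, hb0, h1, h2, h3, h4⟩ := h
  refine ⟨fun i => hb0 (-i), fun i => ha0 (-i), fun i => ?_, fun i => ?_, fun i => ?_,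
    fun i => ?_⟩ <;>
  · simp only
    rw [show -(i + 1) = -i - 1 from by ring, show -(i - 1) = -i + 1 from by ring]
    first
    | linarith [h2 (-i)]
    | linarith [h1 (-i)]
    | linarith [h4 (-i)]
    | linarith [h3 (-i)]

theorem positive_abmn_boundary_limits (a b m n : ℤ → ℝ) (h : IsABMN a b m n)
    (ha : ∀ i, 0 < a i) (hb : ∀ i, 0 < b i) :
    StrictMono m ∧ BddAbove (Set.range m) ∧ BddBelow (Set.range m) ∧
    StrictAnti n ∧ BddAbove (Set.range n) ∧ BddBelow (Set.range n) ∧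
    ∃ mNegInf mInf nNegInf nInf : ℝ,
      Filter.Tendsto m Filter.atBot (nhds mNegInf) ∧
      Filter.Tendsto m Filter.atTop (nhds mInf) ∧
      Filter.Tendsto n Filter.atBot (nhds nNegInf) ∧
      Filter.Tendsto n Filter.atTop (nhds nInf) ∧
      mNegInf < mInf ∧ nInf < nNegInf ∧
      0 < (nNegInf - nInf) / (mInf - mNegInf) := by
  obtain ⟨hm, hn, hMA, hNB⟩ := abmn_forward a b m n h ha hb
  obtain ⟨-, -, hNA', hMB'⟩ := abmn_forward _ _ _ _ (abmn_symm a b m n h)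
    (fun i => hb (-i)) (fun i => ha (-i))
  have hrn : Set.range (fun i : ℤ => n (-i)) = Set.range n := by
    exact Function.Surjective.range_comp neg_surjective n
  have hrm : Set.range (fun i : ℤ => m (-i)) = Set.range m := by
    exact Function.Surjective.range_comp neg_surjective m
  rw [hrn] at hNA'
  rw [hrm] at hMB'
  refine ⟨hm, hMA, hMB', hn, hNA', hNB, ⨅ i, m i, ⨆ i, m i, ⨆ i, n i, ⨅ i, n i,
    tendsto_atBot_ciInf hm.monotone hMB', tendsto_atTop_ciSup hm.monotone hMA,
    tendsto_atBot_ciSup hn.antitone hNA', tendsto_atTop_ciInf hn.antitone hNB, ?_, ?_, ?_⟩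
  · have h1 : (⨅ i, m i) ≤ m 0 := ciInf_le hMB' 0
    have h2 : m 0 < m 1 := hm (by norm_num)
    have h3 : m 1 ≤ ⨆ i, m i := le_ciSup hMA 1
    linarith
  · have h1 : (⨅ i, n i) ≤ n 1 := ciInf_le hNB 1
    have h2 : n 1 < n 0 := hn (by norm_num)
    have h3 : n 0 ≤ ⨆ i, n i := le_ciSup hNA' 0
    linarith
  · have h1 : (⨅ i, m i) ≤ m 0 := ciInf_le hMB' 0
    have h2 : m 0 < m 1 := hm (by norm_num)
    have h3 : m 1 ≤ ⨆ i, m i := le_ciSup hMA 1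
    have h4 : (⨅ i, n i) ≤ n 1 := ciInf_le hNB 1
    have h5 : n 1 < n 0 := hn (by norm_num)
    have h6 : n 0 ≤ ⨆ i, n i := le_ciSup hNA' 0
    apply div_pos <;> linarith
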